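/- For every integer m ≥ 1 and every r with mℓ − ℓ ≤ r ≤ mℓ, the coefficient of uʳ in tr E(u)ᵐ belongs to the center of the universal enveloping algebra U((𝔤𝔩_N)_ℓ). (Remark 3.2, the 𝔤𝔩_N version of Proposition 3.1.) -/

import Mathlib

/- Context: 𝔤𝔩_N(ℂ) = Mat_N(ℂ) with commutator bracket, E_{ij} elementary matrices;
(𝔤𝔩_N)_ℓ = 𝔤𝔩_N ⊗ ℂ[v]/(v^{ℓ+1}) the Takiff algebra, E^{(r)}_{ij} = E_{ij} ⊗ vʳ,
E(u) the N×N matrix over U((𝔤𝔩_N)_ℓ)[u] with entries ∑_{r=0}^ℓ ι(E^{(r)}_{ij})uʳ. -/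

open TensorProduct

attribute [local instance 100] LieRing.ofAssociativeRing

/-- The truncated polynomial ring `ℂ[v]/(v^{ℓ+1})`. -/
abbrev TruncPoly (ℓ : ℕ) : Type :=
  Polynomial ℂ ⧸ Ideal.span {(Polynomial.X : Polynomial ℂ) ^ (ℓ + 1)}

/-- The image of `vʳ` in `ℂ[v]/(v^{ℓ+1})`. -/
noncomputable def vpow (ℓ r : ℕ) : TruncPoly ℓ :=
  Ideal.Quotient.mk _ (Polynomial.X ^ r)

/-- A base-changed Lie algebra is also a Lie algebra over the base field. -/
noncomputable instance instLieAlgebraCBaseChange {g : Type} [LieRing g] [LieAlgebra ℂ g]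
    {A : Type} [CommRing A] [Algebra ℂ A] : LieAlgebra ℂ (A ⊗[ℂ] g) where
  lie_smul t x y := by
    rw [← algebraMap_smul A t y, ← algebraMap_smul A t ⁅x, y⁆]
    exact (LieAlgebra.ExtendScalars.instLieAlgebra ℂ A g).lie_smul _ x y

/-- The matrix `E(u)` over `U((𝔤𝔩_N)_ℓ)[u]` with entries `∑_{r=0}^ℓ ι(E_{ij} ⊗ vʳ)·uʳ`. -/
noncomputable def glEMat (N ℓ : ℕ) :
    Matrix (Fin N) (Fin N)
      (Polynomial (UniversalEnvelopingAlgebra ℂ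
        (TruncPoly ℓ ⊗[ℂ] Matrix (Fin N) (Fin N) ℂ))) :=
  Matrix.of fun i j => ∑ r : Fin (ℓ + 1),
    Polynomial.C (UniversalEnvelopingAlgebra.ι ℂ
      (vpow ℓ (r : ℕ) ⊗ₜ Matrix.single i j (1 : ℂ))) * Polynomial.X ^ (r : ℕ)

/-! ### Auxiliary material -/

set_option maxHeartbeats 1000000
set_option synthInstance.maxHeartbeats 400000

open UniversalEnvelopingAlgebra Polynomial Finset

section CommuteIota

variable {L : Type} [LieRing L] [LieAlgebra ℂ L]

theorem central_of_commute_ι (z : UniversalEnvelopingAlgebra ℂ L)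
    (h : ∀ x : L, ι ℂ x * z = z * ι ℂ x) :
    z ∈ Subalgebra.center ℂ (UniversalEnvelopingAlgebra ℂ L) := by
  set C := Subalgebra.centralizer ℂ ({z} : Set (UniversalEnvelopingAlgebra ℂ L)) with hC
  have hmem : ∀ x : L, ι ℂ x ∈ C := by
    intro x
    rw [hC, Subalgebra.mem_centralizer_iff]
    rintro g rfl
    exact (h x).symm
  let f : L →ₗ⁅ℂ⁆ C :=
    { toFun := fun x => ⟨ι ℂ x, hmem x⟩
      map_add' := fun x y => by ext; simp
      map_smul' := fun c x => by ext; simp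
      map_lie' := fun {x y} => by
        ext
        show ((ι ℂ) ⁅x, y⁆ : UniversalEnvelopingAlgebra ℂ L) = _
        rw [LieHom.map_lie]
        rfl }
  have key : (C.val.comp (lift ℂ f) : UniversalEnvelopingAlgebra ℂ L →ₐ[ℂ] _) = AlgHom.id ℂ _ := by
    apply hom_ext
    ext x
    show C.val (lift ℂ f (ι ℂ x)) = ι ℂ x
    rw [lift_ι_apply]
    rfl
  rw [Subalgebra.mem_center_iff]
  intro b
  have hb : b ∈ C := by
    have h2 := DFunLike.congr_fun key b
    have h3 : C.val (lift ℂ f b) = b := h2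
    rw [← h3]
    exact (lift ℂ f b).2
  rw [Subalgebra.mem_centralizer_iff] at hb
  exact (hb z rfl).symm

end CommuteIota

section Generic

variable {n : ℕ} {A : Type} [Ring A]

/-- Entrywise commutator of a matrix with a scalar. -/
noncomputable def Dc {n : ℕ} {A : Type} [Ring A] (c : A)
    (M : Matrix (Fin n) (Fin n) A) : Matrix (Fin n) (Fin n) A :=
  Matrix.of fun i j => c * M i j - M i j * c

lemma Dc_one (c : A) : Dc c (1 : Matrix (Fin n) (Fin n) A) = 0 := by
  ext i j
  by_cases h : i = j
  · simp [Dc, Matrix.one_apply, h]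
  · simp [Dc, Matrix.one_apply, h]

lemma Dc_mul (c : A) (M P : Matrix (Fin n) (Fin n) A) :
    Dc c (M * P) = Dc c M * P + M * Dc c P := by
  ext i j
  simp only [Dc, Matrix.of_apply, Matrix.add_apply, Matrix.mul_apply]
  rw [← Finset.sum_add_distrib, Finset.mul_sum, Finset.sum_mul, ← Finset.sum_sub_distrib]
  refine Finset.sum_congr rfl fun p _ => ?_
  noncomm_ring

lemma trace_Dc (c : A) (M : Matrix (Fin n) (Fin n) A) :
    (Dc c M).trace = c * M.trace - M.trace * c := by
  simp only [Dc, Matrix.trace, Matrix.diag, Matrix.of_apply, Finset.mul_sum, Finset.sum_mul,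
    Finset.sum_sub_distrib]

lemma trace_scalar_mul (z : A) (M : Matrix (Fin n) (Fin n) A) :
    (Matrix.scalar (Fin n) z * M).trace = z * M.trace := by
  simp only [Matrix.scalar_apply, Matrix.trace, Matrix.diag, Matrix.diagonal_mul, Finset.mul_sum]

lemma trace_std_mul_left (k l : Fin n) (M : Matrix (Fin n) (Fin n) A) :
    (Matrix.single l k (1 : A) * M).trace = M k l := by
  rw [Matrix.trace]
  rw [Finset.sum_eq_single l]
  · simp [Matrix.diag]
  · intro b _ hb
    simp [Matrix.diag, hb]
  · simp

lemma trace_std_mul_right (k l : Fin n) (M : Matrix (Fin n) (Fin n) A) :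
    (M * Matrix.single l k (1 : A)).trace = M k l := by
  rw [Matrix.trace]
  rw [Finset.sum_eq_single k]
  · simp [Matrix.diag]
  · intro b _ hb
    simp [Matrix.diag, hb]
  · simp

/-- The key telescoping identity. -/
lemma key_telescope (c : A) (Z E G L S : Matrix (Fin n) (Fin n) A)
    (hZcomm : ∀ M : Matrix (Fin n) (Fin n) A, Z * M = M * Z)
    (hDE : Dc c E = S * G - G * S)
    (hZG : Z * G = E - L) :
    ∀ m : ℕ, Z * Dc c (E ^ m) =
      (S * E ^ m - E ^ m * S) +
        ∑ t ∈ range m, E ^ t * (L * S - S * L) * E ^ (m - 1 - t) := by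
  intro m
  induction m with
  | zero => simp [Dc_one]
  | succ m ih =>
    have hZDE : Z * Dc c E = S * (E - L) - (E - L) * S := by
      rw [hDE, mul_sub, ← mul_assoc, hZcomm S, mul_assoc, hZG, ← mul_assoc, hZG]
    have hsum : ∑ t ∈ range (m + 1), E ^ t * (L * S - S * L) * E ^ (m + 1 - 1 - t) =
        (L * S - S * L) * E ^ m +
          E * ∑ t ∈ range m, E ^ t * (L * S - S * L) * E ^ (m - 1 - t) := by
      rw [Finset.sum_range_succ']
      simp only [pow_zero, one_mul, Nat.add_sub_cancel, Finset.mul_sum]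
      rw [add_comm]
      congr 1
      refine Finset.sum_congr rfl fun t ht => ?_
      rw [Finset.mem_range] at ht
      have h1 : m - (t + 1) = m - 1 - t := by omega
      rw [h1, pow_succ', mul_assoc, mul_assoc, mul_assoc]
    have hZE : Z * (E * Dc c (E ^ m)) = E * (Z * Dc c (E ^ m)) := by
      rw [← mul_assoc, hZcomm E, mul_assoc]
    rw [pow_succ', Dc_mul, mul_add, ← mul_assoc Z (Dc c E), hZDE, hZE, ih, hsum]
    noncomm_ring

end Generic

section DegBounds

variable {n : ℕ} {A : Type} [Ring A]

lemma deg_matmul {a b : ℕ} (M P : Matrix (Fin n) (Fin n) A[X])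
    (hM : ∀ i j, (M i j).degree ≤ (a : ℕ)) (hP : ∀ i j, (P i j).degree ≤ (b : ℕ)) :
    ∀ i j, ((M * P) i j).degree ≤ ((a + b : ℕ) : WithBot ℕ) := by
  intro i j
  rw [Matrix.mul_apply]
  refine (Polynomial.degree_sum_le _ _).trans ?_
  refine Finset.sup_le fun p _ => ?_
  refine (Polynomial.degree_mul_le _ _).trans ?_
  rw [Nat.cast_add]
  exact add_le_add (hM i p) (hP p j)

lemma deg_pow {a : ℕ} (M : Matrix (Fin n) (Fin n) A[X])
    (hM : ∀ i j, (M i j).degree ≤ (a : ℕ)) (t : ℕ) :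
    ∀ i j, ((M ^ t) i j).degree ≤ ((t * a : ℕ) : WithBot ℕ) := by
  induction t with
  | zero =>
    intro i j
    rw [pow_zero]
    by_cases h : i = j
    · simp [Matrix.one_apply, h, Polynomial.degree_one_le]
    · simp [Matrix.one_apply, h]
  | succ t ih =>
    have := deg_matmul (M ^ t) M ih hM
    intro i j
    have h2 := this i j
    rw [← pow_succ] at h2
    convert h2 using 2
    ring

end DegBounds

section Concrete

abbrev Ualg (N ℓ : ℕ) : Type :=
  UniversalEnvelopingAlgebra ℂ (TruncPoly ℓ ⊗[ℂ] Matrix (Fin N) (Fin N) ℂ)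

noncomputable def gen (N ℓ : ℕ) (q : ℕ) (i j : Fin N) : Ualg N ℓ :=
  UniversalEnvelopingAlgebra.ι ℂ (vpow ℓ q ⊗ₜ Matrix.single i j (1 : ℂ))

lemma vpow_mul (ℓ a b : ℕ) : vpow ℓ a * vpow ℓ b = vpow ℓ (a + b) := by
  simp [vpow, ← map_mul, ← pow_add]

lemma vpow_eq_zero (ℓ q : ℕ) (h : ℓ < q) : vpow ℓ q = 0 := by
  rw [vpow, Ideal.Quotient.eq_zero_iff_mem, Ideal.mem_span_singleton]
  exact pow_dvd_pow _ h

lemma gen_eq_zero (N ℓ q : ℕ) (h : ℓ < q) (i j : Fin N) : gen N ℓ q i j = 0 := by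
  rw [gen, vpow_eq_zero ℓ q h, TensorProduct.zero_tmul, map_zero]

lemma std_mul (N : ℕ) (i j k l : Fin N) :
    Matrix.single i j (1:ℂ) * Matrix.single k l (1:ℂ) =
      if j = k then Matrix.single i l (1:ℂ) else 0 := by
  split
  · subst ‹j = k›; rw [Matrix.single_mul_single_same, one_mul]
  · exact Matrix.single_mul_single_of_ne _ _ _ _ ‹j ≠ k› _

lemma gen_comm (N ℓ : ℕ) (s q : ℕ) (k l i j : Fin N) :
    gen N ℓ s k l * gen N ℓ q i j - gen N ℓ q i j * gen N ℓ s k l =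
      (if l = i then gen N ℓ (q + s) k j else 0) -
      (if j = k then gen N ℓ (q + s) i l else 0) := by
  have h1 : gen N ℓ s k l * gen N ℓ q i j - gen N ℓ q i j * gen N ℓ s k l =
      UniversalEnvelopingAlgebra.ι ℂ
        ⁅(vpow ℓ s ⊗ₜ Matrix.single k l (1:ℂ) : TruncPoly ℓ ⊗[ℂ] Matrix (Fin N) (Fin N) ℂ),
         (vpow ℓ q ⊗ₜ Matrix.single i j (1:ℂ) :
           TruncPoly ℓ ⊗[ℂ] Matrix (Fin N) (Fin N) ℂ)⁆ := by
    rw [LieHom.map_lie]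
    rfl
  rw [h1, LieAlgebra.ExtendScalars.bracket_tmul, vpow_mul, Ring.lie_def, std_mul, std_mul,
    TensorProduct.tmul_sub]
  rw [add_comm s q]
  rw [map_sub]
  congr 1 <;> (split_ifs <;> simp [gen, TensorProduct.tmul_zero])

noncomputable def Gm (N ℓ s : ℕ) : Matrix (Fin N) (Fin N) (Polynomial (Ualg N ℓ)) :=
  Matrix.of fun i j => ∑ q ∈ range (ℓ + 1), C (gen N ℓ (q + s) i j) * X ^ q

noncomputable def Lm (N ℓ s : ℕ) : Matrix (Fin N) (Fin N) (Polynomial (Ualg N ℓ)) :=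
  Matrix.of fun i j => ∑ q ∈ range s, C (gen N ℓ q i j) * X ^ q

lemma Gm_zero_apply (N ℓ : ℕ) (i j : Fin N) :
    Gm N ℓ 0 i j = ∑ q ∈ range (ℓ + 1), C (gen N ℓ q i j) * X ^ q := by
  simp [Gm]

lemma glEMat_eq (N ℓ : ℕ) : glEMat N ℓ = Gm N ℓ 0 := by
  ext i j
  rw [glEMat, Gm_zero_apply, Matrix.of_apply,
    Fin.sum_univ_eq_sum_range
      (fun q => C (UniversalEnvelopingAlgebra.ι ℂ
        (vpow ℓ q ⊗ₜ Matrix.single i j (1:ℂ))) * X ^ q) (ℓ+1)]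
  rfl

lemma X_pow_mul_G (N ℓ s : ℕ) (hs : s ≤ ℓ) (i j : Fin N) :
    X ^ s * Gm N ℓ s i j = Gm N ℓ 0 i j - Lm N ℓ s i j := by
  have h1 : X ^ s * Gm N ℓ s i j = ∑ q ∈ range (ℓ + 1), C (gen N ℓ (q + s) i j) * X ^ (q + s) := by
    rw [Gm, Matrix.of_apply, Finset.mul_sum]
    refine Finset.sum_congr rfl fun q _ => ?_
    rw [X_pow_mul, mul_assoc, ← pow_add]
  rw [h1]
  have h2 : ∑ q ∈ range (ℓ + 1), C (gen N ℓ (q + s) i j) * X ^ (q + s) =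
      ∑ q ∈ Ico s (ℓ + 1 + s), C (gen N ℓ q i j) * X ^ q := by
    rw [Finset.sum_Ico_eq_sum_range]
    simp [add_comm, Nat.add_sub_cancel]
  rw [h2]
  have h3 : ∑ q ∈ Ico s (ℓ + 1 + s), C (gen N ℓ q i j) * X ^ q =
      ∑ q ∈ Ico s (ℓ + 1), C (gen N ℓ q i j) * X ^ q := by
    rw [← Finset.sum_Ico_consecutive _ (by omega : s ≤ ℓ + 1) (by omega : ℓ + 1 ≤ ℓ + 1 + s)]
    have : ∑ q ∈ Ico (ℓ + 1) (ℓ + 1 + s), C (gen N ℓ q i j) * X ^ q = 0 := by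
      refine Finset.sum_eq_zero fun q hq => ?_
      rw [Finset.mem_Ico] at hq
      rw [gen_eq_zero N ℓ q (by omega), map_zero, zero_mul]
    rw [this, add_zero]
  rw [h3, Gm_zero_apply, Lm, Matrix.of_apply,
    ← Finset.sum_range_add_sum_Ico (fun q => C (gen N ℓ q i j) * X ^ q) (by omega : s ≤ ℓ + 1)]
  exact (add_sub_cancel_left _ _).symm

end Concrete


section Concrete2

lemma Dc_Gm_entry (N ℓ s : ℕ) (k l i j : Fin N) :
    Dc (C (gen N ℓ s k l)) (Gm N ℓ 0) i j =
      (if l = i then Gm N ℓ s k j else 0) - (if j = k then Gm N ℓ s i l else 0) := by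
  have key : ∀ q : ℕ,
      C (gen N ℓ s k l) * (C (gen N ℓ q i j) * X ^ q) -
        C (gen N ℓ q i j) * X ^ q * C (gen N ℓ s k l)
      = (if l = i then C (gen N ℓ (q + s) k j) * X ^ q else 0) -
        (if j = k then C (gen N ℓ (q + s) i l) * X ^ q else 0) := by
    intro q
    have h2 : C (gen N ℓ q i j) * X ^ q * C (gen N ℓ s k l)
        = C (gen N ℓ q i j) * C (gen N ℓ s k l) * X ^ q := by
      rw [mul_assoc, X_pow_mul, ← mul_assoc]
    rw [h2, ← mul_assoc, ← sub_mul, ← map_mul, ← map_mul, ← map_sub, gen_comm, map_sub, sub_mul]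
    congr 1
    · rw [apply_ite C, apply_ite (· * X ^ q), map_zero, zero_mul]
    · rw [apply_ite C, apply_ite (· * X ^ q), map_zero, zero_mul]
  rw [Dc, Matrix.of_apply, Gm_zero_apply, Finset.mul_sum, Finset.sum_mul,
    ← Finset.sum_sub_distrib]
  calc (∑ q ∈ range (ℓ + 1),
        (C (gen N ℓ s k l) * (C (gen N ℓ q i j) * X ^ q) -
          C (gen N ℓ q i j) * X ^ q * C (gen N ℓ s k l)))
      = ∑ q ∈ range (ℓ + 1),
          ((if l = i then C (gen N ℓ (q + s) k j) * X ^ q else 0) -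
            (if j = k then C (gen N ℓ (q + s) i l) * X ^ q else 0)) :=
        Finset.sum_congr rfl fun q _ => key q
    _ = (if l = i then Gm N ℓ s k j else 0) - (if j = k then Gm N ℓ s i l else 0) := by
        rw [Finset.sum_sub_distrib]
        congr 1
        · split_ifs with h
          · rfl
          · exact Finset.sum_const_zero
        · split_ifs with h
          · rfl
          · exact Finset.sum_const_zero

lemma hDE_concrete (N ℓ s : ℕ) (k l : Fin N) :
    Dc (C (gen N ℓ s k l)) (Gm N ℓ 0) =
      Matrix.single l k (1 : Polynomial (Ualg N ℓ)) * Gm N ℓ s -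
        Gm N ℓ s * Matrix.single l k (1 : Polynomial (Ualg N ℓ)) := by
  ext i j
  rw [Matrix.sub_apply, Dc_Gm_entry]
  have hS1 : (Matrix.single l k (1 : Polynomial (Ualg N ℓ)) * Gm N ℓ s) i j =
      if l = i then Gm N ℓ s k j else 0 := by
    by_cases h : l = i
    · subst h; simp
    · rw [if_neg h]
      exact Matrix.single_mul_apply_of_ne 1 l k i j (fun h' : i = l => h h'.symm) _
  have hS2 : (Gm N ℓ s * Matrix.single l k (1 : Polynomial (Ualg N ℓ))) i j =
      if j = k then Gm N ℓ s i l else 0 := by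
    by_cases h : j = k
    · subst h; simp
    · rw [if_neg h]
      exact Matrix.mul_single_apply_of_ne 1 l k i j h _
  rw [hS1, hS2]

lemma hZG_concrete (N ℓ s : ℕ) (hs : s ≤ ℓ) :
    Matrix.scalar (Fin N) ((X : Polynomial (Ualg N ℓ)) ^ s) * Gm N ℓ s =
      Gm N ℓ 0 - Lm N ℓ s := by
  ext i j
  rw [Matrix.sub_apply, ← X_pow_mul_G N ℓ s hs]
  simp [Matrix.scalar_apply, Matrix.diagonal_mul]

lemma hZcomm_concrete (N ℓ s : ℕ) (M : Matrix (Fin N) (Fin N) (Polynomial (Ualg N ℓ))) :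
    Matrix.scalar (Fin N) ((X : Polynomial (Ualg N ℓ)) ^ s) * M =
      M * Matrix.scalar (Fin N) ((X : Polynomial (Ualg N ℓ)) ^ s) :=
  Matrix.scalar_commute _ (fun p => (Polynomial.commute_X p).pow_left s) M

end Concrete2


section MainCommute

lemma deg_Gm (N ℓ : ℕ) : ∀ i j, ((Gm N ℓ 0) i j).degree ≤ (ℓ : WithBot ℕ) := by
  intro i j
  rw [Gm_zero_apply]
  refine (Polynomial.degree_sum_le _ _).trans (Finset.sup_le fun q hq => ?_)
  rw [Finset.mem_range] at hq
  exact (Polynomial.degree_C_mul_X_pow_le _ _).trans (Nat.cast_le.mpr (by omega))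

lemma deg_Lm (N ℓ s : ℕ) : ∀ i j, ((Lm N ℓ s) i j).degree ≤ ((s - 1 : ℕ) : WithBot ℕ) := by
  intro i j
  rw [Lm, Matrix.of_apply]
  refine (Polynomial.degree_sum_le _ _).trans (Finset.sup_le fun q hq => ?_)
  rw [Finset.mem_range] at hq
  exact (Polynomial.degree_C_mul_X_pow_le _ _).trans (Nat.cast_le.mpr (by omega))

lemma deg_std {A : Type} [Ring A] (N : ℕ) (l k : Fin N) :
    ∀ i j, ((Matrix.single l k (1 : Polynomial A)) i j).degree ≤ ((0 : ℕ) : WithBot ℕ) := by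
  intro i j
  rw [Matrix.single]
  simp only [Matrix.of_apply]
  split_ifs
  · exact Polynomial.degree_one_le
  · simp

lemma commute_with_gen (N ℓ : ℕ) (s : ℕ) (hs : s ≤ ℓ) (k l : Fin N)
    (m r : ℕ) (hm : 1 ≤ m) (hr1 : m * ℓ - ℓ ≤ r) :
    gen N ℓ s k l * ((Gm N ℓ 0 ^ m).trace.coeff r) =
      ((Gm N ℓ 0 ^ m).trace.coeff r) * gen N ℓ s k l := by
  set E := Gm N ℓ 0 with hE
  set S := Matrix.single l k (1 : Polynomial (Ualg N ℓ)) with hS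
  set Z := Matrix.scalar (Fin N) ((X : Polynomial (Ualg N ℓ)) ^ s) with hZ
  set c := C (gen N ℓ s k l) with hc
  set T := ∑ t ∈ range m, E ^ t * (Lm N ℓ s * S - S * Lm N ℓ s) * E ^ (m - 1 - t) with hT
  have htel := key_telescope c Z E (Gm N ℓ s) (Lm N ℓ s) S
    (hZcomm_concrete N ℓ s) (hDE_concrete N ℓ s k l) (hZG_concrete N ℓ s hs) m
  have htr : X ^ s * (c * (E ^ m).trace - (E ^ m).trace * c) = T.trace := by
    have h1 := congrArg Matrix.trace htel
    rw [trace_scalar_mul, trace_Dc] at h1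
    rw [h1, Matrix.trace_add, Matrix.trace_sub]
    rw [hS, trace_std_mul_left, trace_std_mul_right]
    rw [sub_self, zero_add]
  have hcoeff : (c * (E ^ m).trace - (E ^ m).trace * c).coeff r = T.trace.coeff (r + s) := by
    rw [← Polynomial.coeff_X_pow_mul (c * (E ^ m).trace - (E ^ m).trace * c) s r, htr]
  have hzero : T.trace.coeff (r + s) = 0 := by
    rcases Nat.eq_zero_or_pos s with hs0 | hs1
    · have hL : Lm N ℓ s = 0 := by
        subst hs0
        ext i j
        simp [Lm]
      have : T = 0 := by
        rw [hT, hL]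
        refine Finset.sum_eq_zero fun t _ => ?_
        simp
      rw [this, Matrix.trace_zero, Polynomial.coeff_zero]
    · -- degree bound
      have hQ : ∀ i j, ((Lm N ℓ s * S - S * Lm N ℓ s) i j).degree
          ≤ (((s - 1) + 0 : ℕ) : WithBot ℕ) := by
        intro i j
        rw [Matrix.sub_apply]
        refine (Polynomial.degree_sub_le _ _).trans (max_le ?_ ?_)
        · exact deg_matmul _ _ (deg_Lm N ℓ s) (deg_std N l k) i j
        · have := deg_matmul _ _ (deg_std N l k) (deg_Lm N ℓ s) i j
          rwa [Nat.zero_add, ← Nat.add_zero (s-1)] at this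
      have hterm : ∀ t ∈ range m, ∀ i j,
          ((E ^ t * (Lm N ℓ s * S - S * Lm N ℓ s) * E ^ (m - 1 - t)) i j).degree
            ≤ (((m - 1) * ℓ + (s - 1) : ℕ) : WithBot ℕ) := by
        intro t ht i j
        rw [Finset.mem_range] at ht
        have h1 := deg_matmul _ _ (deg_matmul _ _ (deg_pow E (deg_Gm N ℓ) t) hQ)
          (deg_pow E (deg_Gm N ℓ) (m - 1 - t)) i j
        refine h1.trans (Nat.cast_le.mpr ?_)
        have h2 : t * ℓ + (m - 1 - t) * ℓ = (m - 1) * ℓ := by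
          rw [← add_mul]
          congr 1
          omega
        omega
      have hdeg : T.trace.degree ≤ (((m - 1) * ℓ + (s - 1) : ℕ) : WithBot ℕ) := by
        rw [hT, Matrix.trace]
        refine (Polynomial.degree_sum_le _ _).trans (Finset.sup_le fun i _ => ?_)
        rw [Matrix.diag]
        rw [Matrix.sum_apply]
        refine (Polynomial.degree_sum_le _ _).trans (Finset.sup_le fun t ht => ?_)
        exact hterm t ht i i
      refine Polynomial.coeff_eq_zero_of_degree_lt (hdeg.trans_lt (Nat.cast_lt.mpr ?_))
      have h3 : (m - 1) * ℓ = m * ℓ - 1 * ℓ := Nat.sub_mul m 1 ℓ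
      rw [one_mul] at h3
      omega
  have hfin := hcoeff.trans hzero
  rw [Polynomial.coeff_sub, Polynomial.coeff_C_mul, Polynomial.coeff_mul_C, sub_eq_zero] at hfin
  exact hfin

end MainCommute


section Span

lemma trunc_span (ℓ : ℕ) (a : TruncPoly ℓ) :
    a ∈ Submodule.span ℂ (Set.range (vpow ℓ)) := by
  obtain ⟨p, rfl⟩ := Ideal.Quotient.mk_surjective a
  have hmon : ∀ (x : ℂ) (n : ℕ),
      Ideal.Quotient.mk _ (Polynomial.C x * Polynomial.X ^ n) ∈
        Submodule.span ℂ (Set.range (vpow ℓ)) := by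
    intro x n
    have h0 : Ideal.Quotient.mk (Ideal.span {(Polynomial.X : Polynomial ℂ) ^ (ℓ + 1)})
        (Polynomial.C x * Polynomial.X ^ n) = x • vpow ℓ n := by
      rw [Polynomial.C_mul']
      exact map_smul (Ideal.Quotient.mkₐ ℂ _) x _
    rw [h0]
    exact Submodule.smul_mem _ x (Submodule.subset_span ⟨n, rfl⟩)
  induction p using Polynomial.induction_on with
  | C x =>
    have := hmon x 0
    rwa [pow_zero, mul_one] at this
  | add p q hp hq =>
    rw [map_add]
    exact Submodule.add_mem _ hp hq
  | monomial n x _ =>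
    exact hmon x (n + 1)

end Span

/-- for `m ≥ 1` and `mℓ − ℓ ≤ r ≤ mℓ`, the coefficient of `uʳ` in
`tr E(u)ᵐ` is central in `U((𝔤𝔩_N)_ℓ)`. -/
theorem takiff_gl_theta_central (N : ℕ) (hN : 1 ≤ N) (ℓ : ℕ) (hℓ : 1 ≤ ℓ)
    (m r : ℕ) (hm : 1 ≤ m) (hr1 : m * ℓ - ℓ ≤ r) (hr2 : r ≤ m * ℓ) :
    (((glEMat N ℓ) ^ m).trace).coeff r ∈
      Subalgebra.center ℂ
        (UniversalEnvelopingAlgebra ℂ (TruncPoly ℓ ⊗[ℂ] Matrix (Fin N) (Fin N) ℂ)) := by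
  rw [glEMat_eq]
  set θ := ((Gm N ℓ 0 ^ m).trace).coeff r with hθ
  apply central_of_commute_ι
  -- the set of Lie algebra elements whose image commutes with θ is a submodule
  let P : Submodule ℂ (TruncPoly ℓ ⊗[ℂ] Matrix (Fin N) (Fin N) ℂ) :=
    { carrier := {x | UniversalEnvelopingAlgebra.ι ℂ x * θ = θ * UniversalEnvelopingAlgebra.ι ℂ x}
      add_mem' := by
        intro x y hx hy
        simp only [Set.mem_setOf_eq, map_add] at *
        rw [add_mul, mul_add, hx, hy]
      zero_mem' := by
        simp only [Set.mem_setOf_eq, map_zero, zero_mul, mul_zero]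
      smul_mem' := by
        intro c x hx
        simp only [Set.mem_setOf_eq, map_smul] at *
        rw [smul_mul_assoc, mul_smul_comm, hx] }
  have hgen : ∀ (q : ℕ) (i j : Fin N), (vpow ℓ q ⊗ₜ Matrix.single i j (1 : ℂ)) ∈ P := by
    intro q i j
    rcases le_or_gt q ℓ with hq | hq
    · exact commute_with_gen N ℓ q hq i j m r hm hr1
    · show gen N ℓ q i j * θ = θ * gen N ℓ q i j
      rw [gen_eq_zero N ℓ q hq, zero_mul, mul_zero]
  have hstd : ∀ (a : TruncPoly ℓ) (i j : Fin N),
      (a ⊗ₜ Matrix.single i j (1 : ℂ)) ∈ P := by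
    intro a i j
    have ha := trunc_span ℓ a
    induction ha using Submodule.span_induction with
    | mem x hx =>
      obtain ⟨q, rfl⟩ := hx
      exact hgen q i j
    | zero =>
      rw [TensorProduct.zero_tmul]
      exact P.zero_mem
    | add x y _ _ hx hy =>
      rw [TensorProduct.add_tmul]
      exact P.add_mem hx hy
    | smul c x _ hx =>
      rw [← TensorProduct.smul_tmul']
      exact P.smul_mem c hx
  have html : ∀ (a : TruncPoly ℓ) (M : Matrix (Fin N) (Fin N) ℂ), (a ⊗ₜ M) ∈ P := by
    intro a M
    rw [Matrix.matrix_eq_sum_single M, TensorProduct.tmul_sum]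
    refine P.sum_mem fun i _ => ?_
    rw [TensorProduct.tmul_sum]
    refine P.sum_mem fun j _ => ?_
    have h1 : Matrix.single i j (M i j) = M i j • Matrix.single i j (1 : ℂ) := by
      rw [Matrix.smul_single, smul_eq_mul, mul_one]
    rw [h1, TensorProduct.tmul_smul]
    exact P.smul_mem _ (hstd a i j)
  intro x
  have hx : x ∈ P := by
    induction x using TensorProduct.induction_on with
    | zero => exact P.zero_mem
    | tmul a M => exact html a M
    | add x y hx hy => exact P.add_mem hx hy
  exact hx
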